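/- Let f : X → ℝ be continuous and let V be a calibrated subaction for f. If z ∈ X satisfies R_+^∞(z) < ∞, then the Birkhoff averages of f along the orbit of z converge to the maximal ergodic value: lim_{n→∞} (1/n) Σ_{j=0}^{n−1} f(σ^j(z)) = β(f). -/

import Mathlib

open MeasureTheory Filter Topology Set ENNReal

noncomputable section

namespace GXY

variable {M : Type*}

/-- The shift map on the sequence space `ℕ → M`. -/
def shift (x : ℕ → M) : ℕ → M := fun n => x (n + 1)

/-- Prepending a symbol `a` to a sequence `x`. -/
def cons (a : M) (x : ℕ → M) : ℕ → M := fun n => Nat.casesOn n a x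

/-- The metric `d(x,y) = ∑ θ^n d_M(x_n, y_n)` on `ℕ → M`. -/
def D [MetricSpace M] (θ : ℝ) (x y : ℕ → M) : ℝ := ∑' n, θ ^ n * dist (x n) (y n)

/-- Hölder continuity with respect to the metric `D θ`. -/
def IsHolder [MetricSpace M] (θ : ℝ) (f : (ℕ → M) → ℝ) : Prop :=
  ∃ C > (0 : ℝ), ∃ α ∈ Set.Ioc (0 : ℝ) 1, ∀ x y, |f x - f y| ≤ C * (D θ x y) ^ α

/-- Shift-invariant Borel probability measures on `ℕ → M`. -/
def IsInvProb [MetricSpace M] [MeasurableSpace M] (μ : Measure (ℕ → M)) : Prop :=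
  IsProbabilityMeasure μ ∧ μ.map shift = μ

/-- The maximal ergodic average `β(f)`. -/
def betaF [MetricSpace M] [MeasurableSpace M] (f : (ℕ → M) → ℝ) : ℝ :=
  sSup { r | ∃ μ : Measure (ℕ → M), IsInvProb μ ∧ r = ∫ x, f x ∂μ }

/-- A maximizing measure for `f`. -/
def IsMaximizing [MetricSpace M] [MeasurableSpace M] (f : (ℕ → M) → ℝ)
    (μ : Measure (ℕ → M)) : Prop :=
  IsInvProb μ ∧ ∫ x, f x ∂μ = betaF f

/-- A calibrated subaction `V` for `f`:
`V y = max_{σ x = y} (f x + V x - β f)` for every `y`. -/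
def IsCalibrated [MetricSpace M] [MeasurableSpace M] (f V : (ℕ → M) → ℝ) : Prop :=
  Continuous V ∧
    ∀ y, IsGreatest { t | ∃ x, shift x = y ∧ t = f x + V x - betaF f } (V y)

/-- The Ruelle transfer operator `(L_g w)(x) = ∫_M e^{g(ax)} w(ax) dm(a)`. -/
def Ruelle [MetricSpace M] [MeasurableSpace M] (m : Measure M) (g w : (ℕ → M) → ℝ) :
    (ℕ → M) → ℝ :=
  fun x => ∫ a, Real.exp (g (cons a x)) * w (cons a x) ∂m

/-- `R₊ = β(f) + V ∘ σ - V - f ≥ 0`. -/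
def Rplus [MetricSpace M] [MeasurableSpace M] (f V : (ℕ → M) → ℝ) (x : ℕ → M) : ℝ :=
  betaF f + V (shift x) - V x - f x

/-- `R₊^∞(z) = ∑_{j≥0} R₊(σ^j z) ∈ [0,∞]`. -/
def RplusInf [MetricSpace M] [MeasurableSpace M] (f V : (ℕ → M) → ℝ) (z : ℕ → M) : ℝ≥0∞ :=
  ∑' j : ℕ, ENNReal.ofReal (Rplus f V (shift^[j] z))

/-- `R₋ = f + V - V ∘ σ - β(f) ≤ 0`. -/
def Rminus [MetricSpace M] [MeasurableSpace M] (f V : (ℕ → M) → ℝ) (x : ℕ → M) : ℝ :=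
  f x + V x - V (shift x) - betaF f

/-- The Birkhoff sum `R₋^k = ∑_{j<k} R₋ ∘ σ^j`. -/
def RminusBirk [MetricSpace M] [MeasurableSpace M] (f V : (ℕ → M) → ℝ) (k : ℕ)
    (z : ℕ → M) : ℝ :=
  ∑ j ∈ Finset.range k, Rminus f V (shift^[j] z)

/-- Extended-real logarithm with the convention `log 0 = -∞`. -/
def elog (t : ℝ) : EReal := if t = 0 then ⊥ else ((Real.log t : ℝ) : EReal)

theorem birkhoff_average_tendsto_beta_of_finite_RplusInf
    [MetricSpace M] [CompactSpace M] [ConnectedSpace M] [MeasurableSpace M] [BorelSpace M]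
    (hdiam : ∀ a b : M, dist a b ≤ 1)
    (θ : ℝ) (hθ : θ ∈ Set.Ioo (0 : ℝ) 1)
    (f V : (ℕ → M) → ℝ) (hf : Continuous f) (hV : IsCalibrated f V)
    (z : ℕ → M) (hz : RplusInf f V z ≠ ⊤) :
    Tendsto (fun n : ℕ => (1 / (n : ℝ)) * ∑ j ∈ Finset.range n, f (shift^[j] z)) atTop
      (nhds (betaF f)) := by
  obtain ⟨hVc, hVg⟩ := hV
  -- R₊ is nonnegative
  have hR : ∀ x, 0 ≤ Rplus f V x := by
    intro x
    have hmem : f x + V x - betaF f ∈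
        { t | ∃ y, shift y = shift x ∧ t = f y + V y - betaF f } := ⟨x, rfl, rfl⟩
    have := (hVg (shift x)).2 hmem
    simp only [Rplus]
    linarith
  -- V is bounded (compact space)
  obtain ⟨C, hC⟩ := isCompact_univ.exists_bound_of_continuousOn hVc.continuousOn
  have hCV : ∀ x : ℕ → M, |V x| ≤ C := fun x => hC x (mem_univ x)
  set T : ℝ := (RplusInf f V z).toReal with hT
  set S : ℕ → ℝ := fun n => ∑ j ∈ Finset.range n, Rplus f V (shift^[j] z) with hSdef
  have hS_nonneg : ∀ n, 0 ≤ S n := fun n =>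
    Finset.sum_nonneg fun j _ => hR _
  have hS_le : ∀ n, S n ≤ T := by
    intro n
    have h1 : ENNReal.ofReal (S n) = ∑ j ∈ Finset.range n,
        ENNReal.ofReal (Rplus f V (shift^[j] z)) :=
      ENNReal.ofReal_sum_of_nonneg fun j _ => hR _
    have h2 : (∑ j ∈ Finset.range n, ENNReal.ofReal (Rplus f V (shift^[j] z)))
        ≤ RplusInf f V z := ENNReal.sum_le_tsum _
    have h3 : ENNReal.ofReal (S n) ≤ RplusInf f V z := h1 ▸ h2
    have := ENNReal.toReal_mono hz h3
    rwa [ENNReal.toReal_ofReal (hS_nonneg n)] at this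
  -- telescoping identity
  have key : ∀ n : ℕ, ∑ j ∈ Finset.range n, f (shift^[j] z)
      = n * betaF f + (V (shift^[n] z) - V z) - S n := by
    intro n
    have hterm : ∀ j, f (shift^[j] z)
        = betaF f + (V (shift^[j+1] z) - V (shift^[j] z)) - Rplus f V (shift^[j] z) := by
      intro j
      simp only [Rplus, Function.iterate_succ_apply']
      ring
    calc ∑ j ∈ Finset.range n, f (shift^[j] z)
        = ∑ j ∈ Finset.range n, (betaF f + (V (shift^[j+1] z) - V (shift^[j] z))
            - Rplus f V (shift^[j] z)) := Finset.sum_congr rfl fun j _ => hterm j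
      _ = (∑ j ∈ Finset.range n, (betaF f + (V (shift^[j+1] z) - V (shift^[j] z))))
            - S n := Finset.sum_sub_distrib _ _
      _ = ((∑ _j ∈ Finset.range n, betaF f)
            + ∑ j ∈ Finset.range n, (V (shift^[j+1] z) - V (shift^[j] z))) - S n := by
          rw [Finset.sum_add_distrib]
      _ = n * betaF f + (V (shift^[n] z) - V (shift^[0] z)) - S n := by
          rw [Finset.sum_const, nsmul_eq_mul, Finset.card_range,
            Finset.sum_range_sub (fun j => V (shift^[j] z))]
      _ = n * betaF f + (V (shift^[n] z) - V z) - S n := by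
          simp [Function.iterate_zero_apply]
  -- the difference from β(f) tends to 0
  have hdiff : Tendsto (fun n : ℕ =>
      (1 / (n : ℝ)) * ∑ j ∈ Finset.range n, f (shift^[j] z) - betaF f) atTop (nhds 0) := by
    have hg : Tendsto (fun n : ℕ => (2 * C + T) / n) atTop (nhds 0) :=
      Tendsto.div_atTop tendsto_const_nhds tendsto_natCast_atTop_atTop
    apply squeeze_zero_norm' ?_ hg
    · filter_upwards [eventually_ge_atTop 1] with n hn
      have hn0 : (0 : ℝ) < n := by exact_mod_cast hn
      have heq : (1 / (n : ℝ)) * ∑ j ∈ Finset.range n, f (shift^[j] z) - betaF f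
          = (V (shift^[n] z) - V z - S n) / n := by
        rw [key n]
        field_simp
        ring
      rw [heq]
      rw [Real.norm_eq_abs, abs_div, abs_of_pos hn0, div_le_div_iff_of_pos_right hn0]
      have h1 := hCV (shift^[n] z)
      have h2 := hCV z
      have h3 := hS_nonneg n
      have h4 := hS_le n
      rw [abs_le] at h1 h2
      rw [abs_le]
      constructor <;> nlinarith
  have := hdiff.add (tendsto_const_nhds (x := betaF f))
  simpa using this

end GXY
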